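/- Let (X_i)_{i≥0} be the Markov chain on {1, ..., k} with transitions P(i → i) = (k−i)/k for 1 ≤ i ≤ k−1, P(i → i−1) = i/k for 2 ≤ i ≤ k, and P(1 → k) = 1/k, started from X_0 = 1, and let d_ℓ = 1 + ∑_{i=1}^ℓ 1{X_i = k}. Then there exist constants a, b > 0 such that for all sufficiently small ε > 0 and all ℓ ≥ 1, P(|d_ℓ − 1 − b_k·ℓ| ≥ ε·ℓ) ≤ a·exp(−b·ε²·ℓ), where b_k = (k·∑_{i=1}^k 1/i)^{−1}. -/

import Mathlib

open MeasureTheory Finset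

set_option maxHeartbeats 1000000

namespace KTreeAux

noncomputable def Pm (k : ℕ) (i j : Fin k) : ℝ :=
  (if j = i then ((k : ℝ) - ((i : ℕ) + 1)) / k else 0) +
  (if (j : ℕ) + 1 = (i : ℕ) then (((i : ℕ) : ℝ) + 1) / k else 0) +
  (if (i : ℕ) = 0 ∧ (j : ℕ) = k - 1 then 1 / (k : ℝ) else 0)
noncomputable def Hk (k : ℕ) : ℝ := ∑ i ∈ range k, (1:ℝ)/(i+1)
noncomputable def bk (k : ℕ) : ℝ := ((k:ℝ) * Hk k)⁻¹
noncomputable def fk (k : ℕ) (j : Fin k) : ℝ := if (j:ℕ) = k - 1 then 1 else 0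
noncomputable def Sm (n : ℕ) : ℝ := ∑ m ∈ range n, (1:ℝ)/(m+2)
noncomputable def hf (k : ℕ) (j : Fin k) : ℝ :=
  if (j:ℕ) = k - 1 then (k:ℝ) * bk k else -((k:ℝ) * bk k) * Sm (j:ℕ)
noncomputable def Gk (k : ℕ) (j : Fin k) : ℝ := hf k j - fk k j
def restr {k ℓ : ℕ} (s : Fin (ℓ+1) → Fin k) : ℕ → Fin k :=
  fun i => s ⟨min i ℓ, Nat.lt_succ_of_le (min_le_right _ _)⟩
noncomputable def wgt (k ℓ : ℕ) (s : Fin (ℓ+1) → Fin k) : ℝ :=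
  (if ((restr s 0 : ℕ) = 0) then 1 else 0) *
    ∏ i ∈ range ℓ, Pm k (restr s i) (restr s (i+1))
noncomputable def Ns (k ℓ : ℕ) (s : Fin (ℓ+1) → Fin k) : ℝ :=
  ∑ i ∈ Icc 1 ℓ, fk k (restr s i)

variable {k : ℕ}

lemma Hk_ge_one (hk : 1 ≤ k) : 1 ≤ Hk k := by
  have h0 : (0:ℕ) ∈ range k := mem_range.2 (by omega)
  have := Finset.single_le_sum (f := fun i : ℕ => (1:ℝ)/(i+1))
    (fun i _ => by positivity) h0
  simpa [Hk] using this

lemma Hk_pos (hk : 1 ≤ k) : 0 < Hk k := lt_of_lt_of_le one_pos (Hk_ge_one hk)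

lemma bk_pos (hk : 1 ≤ k) : 0 < bk k := by
  have := Hk_pos hk
  have hk' : (0:ℝ) < k := by exact_mod_cast Nat.pos_of_ne_zero (by omega)
  unfold bk; positivity

lemma kbk (hk : 1 ≤ k) : (k:ℝ) * bk k = (Hk k)⁻¹ := by
  have hk' : (k:ℝ) ≠ 0 := by
    have : (0:ℝ) < k := by exact_mod_cast Nat.pos_of_ne_zero (by omega)
    exact this.ne'
  rw [bk, mul_inv, ← mul_assoc, mul_inv_cancel₀ hk', one_mul]

lemma kbk_le_one (hk : 1 ≤ k) : (k:ℝ) * bk k ≤ 1 := by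
  rw [kbk hk]
  have := Hk_ge_one hk
  rw [inv_le_one_iff₀]; right; exact this

lemma Sm_le_Hk (hk : 1 ≤ k) {n : ℕ} (hn : n ≤ k) : Sm n ≤ Hk k := by
  have h1 : Sm n ≤ ∑ m ∈ range n, (1:ℝ)/(m+1) := by
    apply Finset.sum_le_sum
    intro m _
    apply div_le_div_of_nonneg_left one_pos.le (by positivity) (by push_cast; linarith)
  have h2 : ∑ m ∈ range n, (1:ℝ)/(m+1) ≤ Hk k := by
    apply Finset.sum_le_sum_of_subset_of_nonneg (range_subset_range.2 hn)
    intro i _ _; positivity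
  exact h1.trans h2

lemma Sm_nonneg (n : ℕ) : 0 ≤ Sm n := Finset.sum_nonneg fun m _ => by positivity

lemma habs (hk : 1 ≤ k) (j : Fin k) : |hf k j| ≤ 1 := by
  have hb := bk_pos hk
  have hkb := kbk_le_one hk
  have hkb0 : 0 ≤ (k:ℝ) * bk k := by positivity
  unfold hf
  split
  · rw [abs_of_nonneg hkb0]; exact hkb
  · rw [neg_mul, abs_neg, abs_of_nonneg (mul_nonneg hkb0 (Sm_nonneg _))]
    calc (k:ℝ) * bk k * Sm (j:ℕ) ≤ (k:ℝ) * bk k * Hk k := by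
          apply mul_le_mul_of_nonneg_left (Sm_le_Hk hk j.isLt.le) hkb0
      _ = 1 := by rw [kbk hk, inv_mul_cancel₀ (Hk_pos hk).ne']

lemma Pm_nonneg (i j : Fin k) : 0 ≤ Pm k i j := by
  have hik : ((i:ℕ):ℝ) + 1 ≤ (k:ℝ) := by exact_mod_cast i.isLt
  have hk0 : (0:ℝ) ≤ k := Nat.cast_nonneg k
  unfold Pm
  apply add_nonneg (add_nonneg ?_ ?_) ?_
  · split
    · apply div_nonneg (by linarith) hk0
    · exact le_refl 0
  · split
    · apply div_nonneg (by positivity) hk0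
    · exact le_refl 0
  · split
    · apply div_nonneg zero_le_one hk0
    · exact le_refl 0

lemma sum_Pm_mul (hk : 2 ≤ k) (c : Fin k → ℝ) (i : Fin k) :
    ∑ j, Pm k i j * c j =
      ((k:ℝ) - ((i:ℕ)+1))/k * c i
      + (if h : 1 ≤ (i:ℕ) then (((i:ℕ):ℝ)+1)/k * c ⟨(i:ℕ)-1, by omega⟩ else 0)
      + (if (i:ℕ) = 0 then 1/(k:ℝ) * c ⟨k-1, Nat.sub_lt (lt_of_lt_of_le two_pos hk) one_pos⟩ else 0) := by
  have expand : ∀ j, Pm k i j * c j =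
      (if j = i then ((k : ℝ) - ((i : ℕ) + 1)) / k * c j else 0) +
      (if (j : ℕ) + 1 = (i : ℕ) then (((i : ℕ) : ℝ) + 1) / k * c j else 0) +
      (if (i : ℕ) = 0 ∧ (j : ℕ) = k - 1 then 1 / (k : ℝ) * c j else 0) := by
    intro j
    unfold Pm
    split <;> split <;> split <;> ring
  rw [Finset.sum_congr rfl (fun j _ => expand j), Finset.sum_add_distrib,
    Finset.sum_add_distrib]
  congr 1
  · congr 1
    · rw [Finset.sum_ite_eq' univ i]
      simp
    · -- second term
      by_cases hi : 1 ≤ (i:ℕ)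
      · rw [dif_pos hi]
        rw [Finset.sum_eq_single (⟨(i:ℕ)-1, by omega⟩ : Fin k)]
        · rw [if_pos (by simp; omega)]
        · intro b _ hb
          rw [if_neg]
          intro hc
          exact hb (Fin.ext (by simp only [Fin.val_mk]; omega))
        · intro h; exact absurd (Finset.mem_univ _) h
      · rw [dif_neg hi]
        apply Finset.sum_eq_zero
        intro j _
        rw [if_neg (by omega)]
  · by_cases hi : (i:ℕ) = 0
    · rw [if_pos hi]
      rw [Finset.sum_eq_single (⟨k-1, by omega⟩ : Fin k)]
      · rw [if_pos (by exact ⟨hi, rfl⟩)]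
      · intro b _ hb
        rw [if_neg]
        rintro ⟨h1, h2⟩
        exact hb (Fin.ext (by simpa using h2))
      · intro h; exact absurd (Finset.mem_univ _) h
    · rw [if_neg hi]
      apply Finset.sum_eq_zero
      intro j _
      rw [if_neg (by tauto)]

lemma kcast_ne (hk : 2 ≤ k) : ((k:ℝ)) ≠ 0 := by
  have : (0:ℝ) < k := by exact_mod_cast (by omega : 0 < k)
  exact this.ne'

lemma row_sum (hk : 2 ≤ k) (i : Fin k) : ∑ j, Pm k i j = 1 := by
  have := sum_Pm_mul hk (fun _ => (1:ℝ)) i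
  simp only [mul_one] at this
  rw [this]
  have hik : (i:ℕ) < k := i.isLt
  have hkne := kcast_ne hk
  by_cases hi : (i:ℕ) = 0
  · rw [dif_neg (by omega), if_pos hi]
    rw [hi]
    push_cast
    field_simp
    ring
  · rw [dif_pos (by omega), if_neg hi]
    field_simp
    ring

lemma Hk_eq (hk : 2 ≤ k) : Hk k = 1 + Sm (k-1) := by
  have h1 : k = (k-1)+1 := by omega
  rw [Hk, h1, Finset.sum_range_succ', Sm]
  push_cast
  rw [add_comm]
  norm_num
  apply Finset.sum_congr rfl
  intro x _
  ring

lemma Sm_succ (n : ℕ) : Sm (n+1) = Sm n + 1/((n:ℝ)+2) := by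
  rw [Sm, Finset.sum_range_succ, Sm]

lemma poisson (hk : 2 ≤ k) (i : Fin k) :
    ∑ j, Pm k i j * hf k j = hf k i - fk k i + bk k := by
  have hik : (i:ℕ) < k := i.isLt
  have hkne := kcast_ne hk
  have hbH : (k:ℝ) * bk k * Hk k = 1 := by
    rw [kbk (by omega), inv_mul_cancel₀ (Hk_pos (by omega)).ne']
  rw [sum_Pm_mul hk (hf k) i]
  by_cases hi0 : (i:ℕ) = 0
  · rw [dif_neg (by omega), if_pos hi0]
    have e1 : hf k i = 0 := by
      rw [hf, if_neg (by omega), hi0]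
      simp [Sm]
    have e2 : hf k ⟨k-1, by omega⟩ = (k:ℝ) * bk k := by
      rw [hf, if_pos (by simp)]
    have e3 : fk k i = 0 := by rw [fk, if_neg (by omega)]
    rw [e1, e2, e3, hi0]
    field_simp
    ring
  · rw [dif_pos (by omega), if_neg hi0]
    by_cases hil : (i:ℕ) = k - 1
    · -- top state
      have e1 : hf k i = (k:ℝ) * bk k := by rw [hf, if_pos hil]
      have e2 : hf k ⟨(i:ℕ)-1, by omega⟩ = -((k:ℝ)*bk k) * Sm (k-2) := by
        rw [hf, if_neg (by simp; omega)]
        congr 2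
        simp; omega
      have e3 : fk k i = 1 := by rw [fk, if_pos hil]
      have hcast : ((i:ℕ):ℝ) = (k:ℝ) - 1 := by
        rw [hil]; push_cast [Nat.cast_sub (by omega : 1 ≤ k)]; ring
      have hSm : Sm (k-1) = Sm (k-2) + 1/(k:ℝ) := by
        have h2 : k - 1 = (k-2)+1 := by omega
        have h3 : ((k-2:ℕ):ℝ) + 2 = (k:ℝ) := by
          rw [Nat.cast_sub (by omega : 2 ≤ k)]; push_cast; ring
        rw [h2, Sm_succ, h3]
      have hH : (k:ℝ) * bk k * (1 + (Sm (k-2) + 1/(k:ℝ))) = 1 := by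
        rw [← hSm, ← Hk_eq hk, hbH]
      rw [e1, e2, e3, hcast]
      have hbk' : ((k:ℝ)*bk k)*(1/(k:ℝ)) = bk k := by
        rw [mul_comm (k:ℝ) (bk k), mul_assoc, mul_one_div, div_self hkne, mul_one]
      have h0 : ((k:ℝ) - ((k:ℝ) - 1 + 1)) = 0 := by ring
      rw [h0, zero_div, zero_mul, zero_add]
      have h1 : ((k:ℝ) - 1 + 1)/(k:ℝ) = 1 := by field_simp; ring
      rw [h1, one_mul]
      nlinarith [hH, hbk']
    · -- middle state
      have e1 : hf k i = -((k:ℝ)*bk k) * Sm (i:ℕ) := by rw [hf, if_neg hil]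
      have e2 : hf k ⟨(i:ℕ)-1, by omega⟩ = -((k:ℝ)*bk k) * Sm ((i:ℕ)-1) := by
        rw [hf, if_neg (by simp; omega)]
      have e3 : fk k i = 0 := by rw [fk, if_neg hil]
      have hSm : Sm (i:ℕ) = Sm ((i:ℕ)-1) + 1/(((i:ℕ):ℝ)+1) := by
        have h2 : (i:ℕ) = ((i:ℕ)-1)+1 := by omega
        have h3 : ((((i:ℕ)-1:ℕ)):ℝ) + 2 = ((i:ℕ):ℝ) + 1 := by
          rw [Nat.cast_sub (by omega : 1 ≤ (i:ℕ))]; push_cast; ring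
        calc Sm (i:ℕ) = Sm (((i:ℕ)-1)+1) := by rw [← h2]
          _ = Sm ((i:ℕ)-1) + 1/(((i:ℕ):ℝ)+1) := by rw [Sm_succ, h3]
      have hbk : bk k = ((k:ℝ)*bk k)/k := by field_simp
      rw [e1, e2, e3, hSm, hbk]
      have hipos : (0:ℝ) < ((i:ℕ):ℝ)+1 := by positivity
      field_simp
      ring

lemma fk_abs (j : Fin k) : |fk k j| ≤ 1 := by
  rw [fk]; split <;> simp

lemma Gk_abs (hk : 1 ≤ k) (j : Fin k) : |Gk k j| ≤ 2 := by
  have := habs hk j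
  have := fk_abs (k := k) j
  rw [Gk]
  calc |hf k j - fk k j| ≤ |hf k j| + |fk k j| := abs_sub _ _
    _ ≤ 2 := by linarith

lemma step (hk : 2 ≤ k) (i : Fin k) {t : ℝ} (ht : |t| ≤ 1) :
    ∑ j, Pm k i j * Real.exp (t * hf k j) ≤
      Real.exp (t * (hf k i - fk k i + bk k) + t^2) := by
  have h1 : ∀ j : Fin k, Real.exp (t * hf k j) ≤ 1 + t * hf k j + t^2 := by
    intro j
    have hx : |t * hf k j| ≤ 1 := by
      rw [abs_mul]
      calc |t| * |hf k j| ≤ 1 * 1 :=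
        mul_le_mul ht (habs (by omega) j) (abs_nonneg _) zero_le_one
        _ = 1 := one_mul 1
    have := Real.exp_bound hx (n := 2) (by norm_num)
    have h2 : ∑ m ∈ range 2, (t * hf k j)^m / m.factorial = 1 + t * hf k j := by
      simp [Finset.sum_range_succ]
    rw [h2] at this
    have h3 : Real.exp (t * hf k j) - (1 + t * hf k j) ≤ |t * hf k j|^2 * (3/(2*2)) := by
      calc Real.exp (t * hf k j) - (1 + t * hf k j) ≤
          |Real.exp (t * hf k j) - (1 + t * hf k j)| := le_abs_self _
        _ ≤ |t * hf k j|^2 * ((2:ℕ).succ / ((2:ℕ).factorial * 2)) := by exact_mod_cast this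
        _ = |t * hf k j|^2 * (3/(2*2)) := by norm_num
    have h4 : |t * hf k j|^2 ≤ t^2 := by
      rw [abs_mul, mul_pow]
      calc |t|^2 * |hf k j|^2 ≤ |t|^2 * 1 := by
            apply mul_le_mul_of_nonneg_left _ (by positivity)
            calc |hf k j|^2 ≤ 1^2 := by
                  apply pow_le_pow_left₀ (abs_nonneg _) (habs (by omega) j)
              _ = 1 := one_pow 2
        _ = t^2 := by rw [mul_one, sq_abs]
    nlinarith [h3, h4]
  calc ∑ j, Pm k i j * Real.exp (t * hf k j)
      ≤ ∑ j, Pm k i j * (1 + t * hf k j + t^2) := by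
        apply Finset.sum_le_sum
        intro j _
        exact mul_le_mul_of_nonneg_left (h1 j) (Pm_nonneg i j)
    _ = (∑ j, Pm k i j) + t * (∑ j, Pm k i j * hf k j)
        + t^2 * (∑ j, Pm k i j) := by
        rw [Finset.mul_sum, Finset.mul_sum, ← Finset.sum_add_distrib,
          ← Finset.sum_add_distrib]
        apply Finset.sum_congr rfl
        intro j _
        ring
    _ = 1 + (t * (hf k i - fk k i + bk k) + t^2) := by
        rw [row_sum hk, poisson hk]
        ring
    _ ≤ Real.exp (t * (hf k i - fk k i + bk k) + t^2) := by
        apply Real.add_one_le_exp (t * (hf k i - fk k i + bk k) + t^2) |>.trans_eq rfl |>.trans_eq' (by ring)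

lemma wgt_nonneg (ℓ : ℕ) (s : Fin (ℓ+1) → Fin k) : 0 ≤ wgt k ℓ s := by
  apply mul_nonneg
  · split <;> norm_num
  · exact Finset.prod_nonneg fun i _ => Pm_nonneg _ _

lemma restr_le {ℓ : ℕ} (s : Fin (ℓ+1) → Fin k) {i : ℕ} (hi : i ≤ ℓ) :
    restr s i = s ⟨i, by omega⟩ := by
  unfold restr
  congr 1
  exact Fin.ext (by simp [min_eq_left hi])

lemma restr_snoc_le {n : ℕ} (s' : Fin (n+1) → Fin k) (j : Fin k) {i : ℕ} (hi : i ≤ n) :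
    restr (Fin.snoc s' j) i = restr s' i := by
  rw [restr_le _ (by omega : i ≤ n+1), restr_le _ hi]
  have : (⟨i, by omega⟩ : Fin (n+2)) = Fin.castSucc ⟨i, by omega⟩ := Fin.ext (by simp)
  rw [this, Fin.snoc_castSucc]

lemma restr_snoc_top {n : ℕ} (s' : Fin (n+1) → Fin k) (j : Fin k) :
    restr (Fin.snoc s' j) (n+1) = j := by
  rw [restr_le _ (le_refl (n+1))]
  have : (⟨n+1, by omega⟩ : Fin (n+2)) = Fin.last (n+1) := Fin.ext (by simp)
  rw [this, Fin.snoc_last]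

lemma Gz (hk : 2 ≤ k) {z : Fin k} (hz : (z:ℕ) = 0) : Gk k z = 0 := by
  rw [Gk, hf, fk, if_neg (by omega), if_neg (by omega), hz]
  simp [Sm]

lemma wgt_snoc (hk : 2 ≤ k) (n : ℕ) (s' : Fin (n+1) → Fin k) (j : Fin k) :
    wgt k (n+1) (Fin.snoc s' j) = wgt k n s' * Pm k (restr s' n) j := by
  rw [wgt, wgt, Finset.prod_range_succ]
  have h0 : restr (Fin.snoc s' j) 0 = restr s' 0 := restr_snoc_le s' j (by omega)
  have hn : restr (Fin.snoc s' j) n = restr s' n := restr_snoc_le s' j (le_refl n)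
  have htp : restr (Fin.snoc s' j) (n+1) = j := restr_snoc_top s' j
  rw [h0, hn, htp]
  have heq : ∏ i ∈ range n, Pm k (restr (Fin.snoc s' j) i) (restr (Fin.snoc s' j) (i+1))
      = ∏ i ∈ range n, Pm k (restr s' i) (restr s' (i+1)) := by
    apply Finset.prod_congr rfl
    intro i hi
    have hi' := Finset.mem_range.1 hi
    rw [restr_snoc_le s' j (by omega), restr_snoc_le s' j (by omega)]
  rw [heq]; ring

lemma Ns_snoc (n : ℕ) (s' : Fin (n+1) → Fin k) (j : Fin k) :
    Ns k (n+1) (Fin.snoc s' j) = Ns k n s' + fk k j := by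
  rw [Ns, Ns, Finset.sum_Icc_succ_top (by omega : 1 ≤ n+1), restr_snoc_top]
  congr 1
  apply Finset.sum_congr rfl
  intro i hi
  have := Finset.mem_Icc.1 hi
  rw [restr_snoc_le s' j (by omega)]

lemma mgfW (hk : 2 ≤ k) {t : ℝ} (ht : |t| ≤ 1) :
    ∀ n : ℕ, (∑ s : Fin (n+1) → Fin k, wgt k n s *
        Real.exp (t * (Ns k n s + Gk k (restr s n))))
      ≤ Real.exp (n * (t * bk k + t^2)) := by
  intro n
  induction n with
  | zero =>
    have e := Equiv.sum_comp (Equiv.funUnique (Fin 1) (Fin k)).symm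
      (fun s : Fin 1 → Fin k => wgt k 0 s * Real.exp (t * (Ns k 0 s + Gk k (restr s 0))))
    rw [← e]
    have heval : ∀ j : Fin k,
        wgt k 0 ((Equiv.funUnique (Fin 1) (Fin k)).symm j) *
          Real.exp (t * (Ns k 0 ((Equiv.funUnique (Fin 1) (Fin k)).symm j)
            + Gk k (restr ((Equiv.funUnique (Fin 1) (Fin k)).symm j) 0)))
        = (if (j:ℕ) = 0 then Real.exp (t * Gk k j) else 0) := by
      intro j
      have h1 : restr ((Equiv.funUnique (Fin 1) (Fin k)).symm j) 0 = j := rfl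
      have h2 : wgt k 0 ((Equiv.funUnique (Fin 1) (Fin k)).symm j)
          = if (j:ℕ) = 0 then 1 else 0 := by
        rw [wgt, show restr ((Equiv.funUnique (Fin 1) (Fin k)).symm j) 0 = j from rfl]
        simp
      have h3 : Ns k 0 ((Equiv.funUnique (Fin 1) (Fin k)).symm j) = 0 := by
        rw [Ns]
        simp
      rw [h1, h2, h3]
      split <;> simp
    rw [Finset.sum_congr rfl (fun j _ => heval j)]
    rw [Finset.sum_eq_single (⟨0, by omega⟩ : Fin k)]
    · rw [if_pos rfl, Gz hk rfl]
      simp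
    · intro b _ hb
      rw [if_neg (fun hc => hb (Fin.ext (by simpa using hc)))]
    · intro h
      exact absurd (Finset.mem_univ _) h
  | succ n ih =>
    set E := Fin.snocEquiv (fun _ : Fin (n+2) => Fin k) with hEdef
    have key : ∀ s' : Fin (n+1) → Fin k, ∀ j : Fin k,
        wgt k (n+1) (E (j, s')) *
          Real.exp (t * (Ns k (n+1) (E (j, s')) + Gk k (restr (E (j, s')) (n+1))))
        = (wgt k n s' * Real.exp (t * Ns k n s')) *
            (Pm k (restr s' n) j * Real.exp (t * hf k j)) := by
      intro s' j
      have hE : (E (j, s') : Fin (n+2) → Fin k) = Fin.snoc s' j := rfl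
      rw [hE, wgt_snoc hk, Ns_snoc, restr_snoc_top]
      rw [Gk]
      rw [show t * (Ns k n s' + fk k j + (hf k j - fk k j))
          = t * Ns k n s' + t * hf k j by ring]
      rw [Real.exp_add]
      ring
    have main : (∑ p : Fin k × (Fin (n+1) → Fin k),
        wgt k (n+1) (E p) *
          Real.exp (t * (Ns k (n+1) (E p) + Gk k (restr (E p) (n+1)))))
        ≤ Real.exp ((n+1 : ℕ) * (t * bk k + t^2)) := by
      rw [Fintype.sum_prod_type, Finset.sum_comm]
      have hb1 : (∑ s' : Fin (n+1) → Fin k, ∑ j : Fin k,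
          wgt k (n+1) (E (j, s')) *
            Real.exp (t * (Ns k (n+1) (E (j, s')) + Gk k (restr (E (j, s')) (n+1)))))
          ≤ ∑ s' : Fin (n+1) → Fin k,
              (wgt k n s' * Real.exp (t * (Ns k n s' + Gk k (restr s' n)))) *
                Real.exp (t * bk k + t^2) := by
        apply Finset.sum_le_sum
        intro s' _
        rw [Finset.sum_congr rfl (fun j _ => key s' j), ← Finset.mul_sum]
        have hstep := step hk (restr s' n) ht
        calc (wgt k n s' * Real.exp (t * Ns k n s')) *
              (∑ j, Pm k (restr s' n) j * Real.exp (t * hf k j))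
            ≤ (wgt k n s' * Real.exp (t * Ns k n s')) *
              Real.exp (t * (hf k (restr s' n) - fk k (restr s' n) + bk k) + t^2) := by
              apply mul_le_mul_of_nonneg_left hstep
              exact mul_nonneg (wgt_nonneg n s') (Real.exp_pos _).le
          _ = (wgt k n s' * Real.exp (t * (Ns k n s' + Gk k (restr s' n)))) *
              Real.exp (t * bk k + t^2) := by
              have harg : t * Ns k n s' +
                  (t * (hf k (restr s' n) - fk k (restr s' n) + bk k) + t^2)
                  = t * (Ns k n s' + Gk k (restr s' n)) + (t * bk k + t^2) := by
                rw [Gk]; ring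
              rw [mul_assoc, ← Real.exp_add, harg, Real.exp_add, ← mul_assoc]
      refine hb1.trans ?_
      rw [← Finset.sum_mul]
      calc (∑ s' : Fin (n+1) → Fin k,
            wgt k n s' * Real.exp (t * (Ns k n s' + Gk k (restr s' n)))) *
            Real.exp (t * bk k + t^2)
          ≤ Real.exp (n * (t * bk k + t^2)) * Real.exp (t * bk k + t^2) := by
            apply mul_le_mul_of_nonneg_right ih (Real.exp_pos _).le
        _ = Real.exp ((n+1 : ℕ) * (t * bk k + t^2)) := by
            rw [← Real.exp_add]
            congr 1
            push_cast
            ring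
    calc (∑ s : Fin (n+1+1) → Fin k, wgt k (n+1) s *
          Real.exp (t * (Ns k (n+1) s + Gk k (restr s (n+1)))))
        = ∑ p : Fin k × (Fin (n+1) → Fin k),
            wgt k (n+1) (E p) *
              Real.exp (t * (Ns k (n+1) (E p) + Gk k (restr (E p) (n+1)))) :=
          (Equiv.sum_comp E _).symm
      _ ≤ _ := main


variable {Ω : Type*} [MeasurableSpace Ω] (μ : Measure Ω) [IsProbabilityMeasure μ]
  (X : ℕ → Ω → Fin k)

lemma cylVal (hk : 2 ≤ k) (hmeas : ∀ i, Measurable (X i))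
    (hstart : μ {ω | X 0 ω = ⟨0, lt_of_lt_of_le two_pos hk⟩} = 1)
    (hm : ∀ (n : ℕ) (s : ℕ → Fin k),
      (μ {ω | ∀ i ≤ n + 1, X i ω = s i}).toReal =
        (μ {ω | ∀ i ≤ n, X i ω = s i}).toReal * Pm k (s n) (s (n + 1)))
    (n : ℕ) (s : ℕ → Fin k) :
    (μ {ω | ∀ i ≤ n, X i ω = s i}).toReal =
      (if ((s 0 : ℕ) = 0) then 1 else 0) * ∏ i ∈ range n, Pm k (s i) (s (i+1)) := by
  induction n with
  | zero =>
    have hset : {ω | ∀ i ≤ 0, X i ω = s i} = {ω | X 0 ω = s 0} := by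
      ext ω
      constructor
      · intro h; exact h 0 (le_refl 0)
      · intro h i hi
        rw [Nat.le_zero.1 hi]; exact h
    rw [hset]
    simp only [range_zero, prod_empty, mul_one]
    by_cases h0 : (s 0 : ℕ) = 0
    · rw [if_pos h0]
      have : s 0 = (⟨0, by omega⟩ : Fin k) := Fin.ext (by simpa using h0)
      rw [this, hstart]
      rfl
    · rw [if_neg h0]
      have hz : μ ({ω | X 0 ω = (⟨0, by omega⟩ : Fin k)}ᶜ) = 0 := by
        rw [prob_compl_eq_zero_iff]
        · exact hstart
        · exact (hmeas 0) (measurableSet_singleton _)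
      have hsub : {ω | X 0 ω = s 0} ⊆ {ω | X 0 ω = (⟨0, by omega⟩ : Fin k)}ᶜ := by
        intro ω hω hmem
        apply h0
        have : s 0 = (⟨0, by omega⟩ : Fin k) := hω ▸ hmem
        rw [this]
      rw [measure_mono_null hsub hz]
      rfl
  | succ n ih =>
    rw [hm n s, ih, Finset.prod_range_succ, mul_assoc]

omit [IsProbabilityMeasure μ] in
lemma partition (hmeas : ∀ i, Measurable (X i)) (ℓ : ℕ)
    (Q : (Fin (ℓ+1) → Fin k) → Prop) [DecidablePred Q] :
    μ {ω | Q (fun i => X i.val ω)} =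
      ∑ s ∈ univ.filter Q, μ {ω | ∀ i : Fin (ℓ+1), X i.val ω = s i} := by
  have hset : {ω | Q (fun i => X i.val ω)} =
      ⋃ s ∈ univ.filter Q, {ω | ∀ i : Fin (ℓ+1), X i.val ω = s i} := by
    ext ω
    simp only [Set.mem_setOf_eq, Set.mem_iUnion, Finset.mem_filter, Finset.mem_univ, true_and]
    constructor
    · intro hQ
      exact ⟨fun i => X i.val ω, hQ, fun i => rfl⟩
    · rintro ⟨s, hQ, hs⟩
      have : (fun i : Fin (ℓ+1) => X i.val ω) = s := funext hs
      rw [this]; exact hQ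
  rw [hset]
  apply measure_biUnion_finset
  · intro s _ s' _ hne
    rw [Function.onFun]
    apply Set.disjoint_left.2
    intro ω h1 h2
    exact hne (funext fun i => (h1 i).symm.trans (h2 i))
  · intro s _
    have : {ω | ∀ i : Fin (ℓ+1), X i.val ω = s i}
        = ⋂ i : Fin (ℓ+1), {ω | X i.val ω = s i} := Set.setOf_forall _
    rw [this]
    exact MeasurableSet.iInter fun i => (hmeas i.val) (measurableSet_singleton _)

omit [IsProbabilityMeasure μ] in
lemma tupleCyl_eq (ℓ : ℕ) (s : Fin (ℓ+1) → Fin k) :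
    {ω | ∀ i : Fin (ℓ+1), X i.val ω = s i} = {ω | ∀ i ≤ ℓ, X i ω = restr s i} := by
  ext ω
  simp only [Set.mem_setOf_eq]
  constructor
  · intro h i hi
    have : restr s i = s ⟨i, by omega⟩ := by
      unfold restr; congr 1; exact Fin.ext (by simp [min_eq_left hi])
    rw [this]
    exact h ⟨i, by omega⟩
  · intro h i
    have hi : (i : ℕ) ≤ ℓ := by omega
    have h1 := h i.val hi
    have : restr s i.val = s i := by
      unfold restr; congr 1; exact Fin.ext (by simp [min_eq_left hi])
    rw [this] at h1
    exact h1

lemma total_mgf (hk : 2 ≤ k) {t : ℝ} (ht : |t| ≤ 1) (ℓ : ℕ) :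
    ∑ s : Fin (ℓ+1) → Fin k, wgt k ℓ s * Real.exp (t * Ns k ℓ s)
      ≤ Real.exp (2*|t|) * Real.exp (ℓ * (t * bk k + t^2)) := by
  have h1 : ∀ s : Fin (ℓ+1) → Fin k,
      wgt k ℓ s * Real.exp (t * Ns k ℓ s)
        ≤ (wgt k ℓ s * Real.exp (t * (Ns k ℓ s + Gk k (restr s ℓ)))) * Real.exp (2*|t|) := by
    intro s
    have hG : -(t * Gk k (restr s ℓ)) ≤ 2*|t| := by
      calc -(t * Gk k (restr s ℓ)) ≤ |t * Gk k (restr s ℓ)| := neg_le_abs _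
        _ = |t| * |Gk k (restr s ℓ)| := abs_mul _ _
        _ ≤ |t| * 2 := mul_le_mul_of_nonneg_left (Gk_abs (by omega) _) (abs_nonneg t)
        _ = 2*|t| := by ring
    have : Real.exp (t * Ns k ℓ s)
        = Real.exp (t * (Ns k ℓ s + Gk k (restr s ℓ))) * Real.exp (-(t * Gk k (restr s ℓ))) := by
      rw [← Real.exp_add]; congr 1; ring
    rw [this, ← mul_assoc]
    apply mul_le_mul_of_nonneg_left (Real.exp_le_exp.2 hG)
    exact mul_nonneg (wgt_nonneg ℓ s) (Real.exp_pos _).le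
  calc ∑ s : Fin (ℓ+1) → Fin k, wgt k ℓ s * Real.exp (t * Ns k ℓ s)
      ≤ ∑ s : Fin (ℓ+1) → Fin k,
          (wgt k ℓ s * Real.exp (t * (Ns k ℓ s + Gk k (restr s ℓ)))) * Real.exp (2*|t|) :=
        Finset.sum_le_sum fun s _ => h1 s
    _ = (∑ s : Fin (ℓ+1) → Fin k,
          wgt k ℓ s * Real.exp (t * (Ns k ℓ s + Gk k (restr s ℓ)))) * Real.exp (2*|t|) :=
        (Finset.sum_mul _ _ _).symm
    _ ≤ Real.exp (ℓ * (t * bk k + t^2)) * Real.exp (2*|t|) :=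
        mul_le_mul_of_nonneg_right (mgfW hk ht ℓ) (Real.exp_pos _).le
    _ = Real.exp (2*|t|) * Real.exp (ℓ * (t * bk k + t^2)) := mul_comm _ _

lemma tail (hk : 2 ≤ k) {t : ℝ} (ht : |t| ≤ 1) (ℓ : ℕ) (c : ℝ)
    (Q : (Fin (ℓ+1) → Fin k) → Prop) [DecidablePred Q]
    (hQ : ∀ s, Q s → 0 ≤ t * (Ns k ℓ s - c * ℓ)) :
    ∑ s ∈ univ.filter Q, wgt k ℓ s
      ≤ Real.exp (2*|t| + ℓ * (t * bk k + t^2) - t * c * ℓ) := by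
  calc ∑ s ∈ univ.filter Q, wgt k ℓ s
      ≤ ∑ s ∈ univ.filter Q, wgt k ℓ s * Real.exp (t * (Ns k ℓ s - c * ℓ)) := by
        apply Finset.sum_le_sum
        intro s hs
        have h1 : 1 ≤ Real.exp (t * (Ns k ℓ s - c * ℓ)) :=
          Real.one_le_exp (hQ s (Finset.mem_filter.1 hs).2)
        calc wgt k ℓ s = wgt k ℓ s * 1 := (mul_one _).symm
          _ ≤ wgt k ℓ s * Real.exp (t * (Ns k ℓ s - c * ℓ)) :=
            mul_le_mul_of_nonneg_left h1 (wgt_nonneg ℓ s)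
    _ ≤ ∑ s : Fin (ℓ+1) → Fin k, wgt k ℓ s * Real.exp (t * (Ns k ℓ s - c * ℓ)) := by
        apply Finset.sum_le_sum_of_subset_of_nonneg (Finset.filter_subset _ _)
        intro s _ _
        exact mul_nonneg (wgt_nonneg ℓ s) (Real.exp_pos _).le
    _ = (∑ s : Fin (ℓ+1) → Fin k, wgt k ℓ s * Real.exp (t * Ns k ℓ s)) *
          Real.exp (-(t * c * ℓ)) := by
        rw [Finset.sum_mul]
        apply Finset.sum_congr rfl
        intro s _
        have harg : t * (Ns k ℓ s - c * ℓ) = t * Ns k ℓ s + -(t * c * ℓ) := by ring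
        rw [harg, Real.exp_add]
        ring
    _ ≤ (Real.exp (2*|t|) * Real.exp (ℓ * (t * bk k + t^2))) * Real.exp (-(t * c * ℓ)) :=
        mul_le_mul_of_nonneg_right (total_mgf hk ht ℓ) (Real.exp_pos _).le
    _ = Real.exp (2*|t| + ℓ * (t * bk k + t^2) - t * c * ℓ) := by
        rw [← Real.exp_add, ← Real.exp_add]
        congr 1

lemma core (hk : 2 ≤ k) {ε : ℝ} (hε : 0 < ε) (hε1 : ε ≤ 1) (ℓ : ℕ) :
    ∑ s ∈ univ.filter
        (fun s : Fin (ℓ+1) → Fin k => ε * ℓ ≤ |Ns k ℓ s - bk k * ℓ|), wgt k ℓ s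
      ≤ (2 * Real.exp 1) * Real.exp (-(1/4) * ε^2 * ℓ) := by
  classical
  set Qa : (Fin (ℓ+1) → Fin k) → Prop := fun s => ε * ℓ ≤ |Ns k ℓ s - bk k * ℓ| with hQa
  set Qu : (Fin (ℓ+1) → Fin k) → Prop := fun s => ε * ℓ ≤ Ns k ℓ s - bk k * ℓ with hQu
  set Ql : (Fin (ℓ+1) → Fin k) → Prop := fun s => ε * ℓ ≤ bk k * ℓ - Ns k ℓ s with hQl
  have hsub : univ.filter Qa ⊆ univ.filter Qu ∪ univ.filter Ql := by
    intro s hs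
    have h := (Finset.mem_filter.1 hs).2
    rcases le_abs.1 h with h1 | h1
    · exact Finset.mem_union_left _ (Finset.mem_filter.2 ⟨Finset.mem_univ _, h1⟩)
    · refine Finset.mem_union_right _ (Finset.mem_filter.2 ⟨Finset.mem_univ _, ?_⟩)
      show ε * ℓ ≤ bk k * ℓ - Ns k ℓ s
      linarith [h1]
  have ht2 : |ε/2| ≤ 1 := by rw [abs_of_pos (by linarith)]; linarith
  have ht2' : |(-(ε/2))| ≤ 1 := by rw [abs_neg]; exact ht2
  have hup : ∑ s ∈ univ.filter Qu, wgt k ℓ s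
      ≤ Real.exp 1 * Real.exp (-(1/4) * ε^2 * ℓ) := by
    have := tail hk ht2 ℓ (bk k + ε) Qu ?_
    · refine this.trans ?_
      rw [← Real.exp_add]
      apply Real.exp_le_exp.2
      rw [abs_of_pos (by linarith : (0:ℝ) < ε/2)]
      have hl0 : (0:ℝ) ≤ ℓ := Nat.cast_nonneg ℓ
      nlinarith [sq_nonneg ε, mul_nonneg (mul_nonneg hε.le hε.le) hl0]
    · intro s hQs
      have : ε * ℓ ≤ Ns k ℓ s - bk k * ℓ := hQs
      have h2 : 0 ≤ Ns k ℓ s - (bk k + ε) * ℓ := by nlinarith [Nat.cast_nonneg (α := ℝ) ℓ]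
      positivity
  have hlo : ∑ s ∈ univ.filter Ql, wgt k ℓ s
      ≤ Real.exp 1 * Real.exp (-(1/4) * ε^2 * ℓ) := by
    have := tail hk ht2' ℓ (bk k - ε) Ql ?_
    · refine this.trans ?_
      rw [← Real.exp_add]
      apply Real.exp_le_exp.2
      rw [abs_neg, abs_of_pos (by linarith : (0:ℝ) < ε/2)]
      nlinarith [sq_nonneg ε, Nat.cast_nonneg (α := ℝ) ℓ,
        mul_nonneg (mul_nonneg hε.le hε.le) (Nat.cast_nonneg (α := ℝ) ℓ)]
    · intro s hQs
      have h1 : ε * ℓ ≤ bk k * ℓ - Ns k ℓ s := hQs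
      have h2 : Ns k ℓ s - (bk k - ε) * ℓ ≤ 0 := by nlinarith [Nat.cast_nonneg (α := ℝ) ℓ]
      nlinarith [h2]
  calc ∑ s ∈ univ.filter Qa, wgt k ℓ s
      ≤ ∑ s ∈ univ.filter Qu ∪ univ.filter Ql, wgt k ℓ s := by
        apply Finset.sum_le_sum_of_subset_of_nonneg hsub
        intro s _ _
        exact wgt_nonneg ℓ s
    _ ≤ ∑ s ∈ univ.filter Qu, wgt k ℓ s + ∑ s ∈ univ.filter Ql, wgt k ℓ s := by
        have := Finset.sum_union_inter (s₁ := univ.filter Qu) (s₂ := univ.filter Ql)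
          (f := fun s => wgt k ℓ s)
        have hnn : 0 ≤ ∑ s ∈ univ.filter Qu ∩ univ.filter Ql, wgt k ℓ s :=
          Finset.sum_nonneg fun s _ => wgt_nonneg ℓ s
        linarith
    _ ≤ Real.exp 1 * Real.exp (-(1/4) * ε^2 * ℓ) +
        Real.exp 1 * Real.exp (-(1/4) * ε^2 * ℓ) := add_le_add hup hlo
    _ = (2 * Real.exp 1) * Real.exp (-(1/4) * ε^2 * ℓ) := by ring

end KTreeAux

open KTreeAux

/-- Concentration for the number of visits to state `k` of the `k`-state Markov chain
arising in random `k`-trees (states are `1, …, k`, encoded as `Fin k` via `i ↦ i − 1`):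
transitions `P(i → i) = (k−i)/k` for `1 ≤ i ≤ k−1`, `P(i → i−1) = i/k` for `2 ≤ i ≤ k`,
`P(1 → k) = 1/k`, started from state `1`. With `d_ℓ = 1 + ∑_{i=1}^ℓ 1{X_i = k}` and
`b_k = (k ∑_{i=1}^k 1/i)⁻¹`, there are `a, b > 0` such that for all small enough `ε > 0`
and all `ℓ ≥ 1`, `P(|d_ℓ − 1 − b_k ℓ| ≥ ε ℓ) ≤ a exp(−b ε² ℓ)`. -/
theorem ktree_chain_concentration (k : ℕ) (hk : 2 ≤ k)
    {Ω : Type*} [MeasurableSpace Ω] (μ : Measure Ω) [IsProbabilityMeasure μ]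
    (X : ℕ → Ω → Fin k) (hmeas : ∀ i, Measurable (X i))
    (P : Matrix (Fin k) (Fin k) ℝ)
    (hP : ∀ i j : Fin k, P i j =
      (if j = i then ((k : ℝ) - ((i : ℕ) + 1)) / k else 0) +
      (if (j : ℕ) + 1 = (i : ℕ) then (((i : ℕ) : ℝ) + 1) / k else 0) +
      (if (i : ℕ) = 0 ∧ (j : ℕ) = k - 1 then 1 / (k : ℝ) else 0))
    (hstart : μ {ω | X 0 ω = ⟨0, by omega⟩} = 1)
    (hmarkov : ∀ (n : ℕ) (s : ℕ → Fin k),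
      (μ {ω | ∀ i ≤ n + 1, X i ω = s i}).toReal =
        (μ {ω | ∀ i ≤ n, X i ω = s i}).toReal * P (s n) (s (n + 1))) :
    ∃ a > (0 : ℝ), ∃ b > (0 : ℝ), ∃ ε₀ > (0 : ℝ), ∀ ε : ℝ, 0 < ε → ε ≤ ε₀ →
      ∀ ℓ : ℕ, 1 ≤ ℓ →
        (μ {ω | ε * ℓ ≤
            |(∑ i ∈ Icc 1 ℓ, if X i ω = (⟨k - 1, by omega⟩ : Fin k) then (1 : ℝ) else 0) -
              (↑k * ∑ i ∈ range k, (1 : ℝ) / (i + 1))⁻¹ * ℓ|}).toReal ≤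
          a * Real.exp (-b * ε ^ 2 * ℓ) := by
  classical
  refine ⟨2 * Real.exp 1, by positivity, 1/4, by norm_num, 1, one_pos, ?_⟩
  intro ε hε hε1 ℓ _
  have hm : ∀ (n : ℕ) (s : ℕ → Fin k),
      (μ {ω | ∀ i ≤ n + 1, X i ω = s i}).toReal =
        (μ {ω | ∀ i ≤ n, X i ω = s i}).toReal * Pm k (s n) (s (n + 1)) := by
    intro n s
    rw [hmarkov n s, hP]
    rfl
  set Q : (Fin (ℓ+1) → Fin k) → Prop :=
    fun s => ε * ℓ ≤ |Ns k ℓ s - bk k * ℓ| with hQdef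
  have hev : {ω | ε * ℓ ≤
      |(∑ i ∈ Icc 1 ℓ, if X i ω = (⟨k - 1, by omega⟩ : Fin k) then (1 : ℝ) else 0) -
        (↑k * ∑ i ∈ range k, (1 : ℝ) / (i + 1))⁻¹ * ℓ|}
      = {ω | Q (fun i : Fin (ℓ+1) => X i.val ω)} := by
    ext ω
    simp only [Set.mem_setOf_eq, hQdef]
    have hsum : (∑ i ∈ Icc 1 ℓ, if X i ω = (⟨k - 1, by omega⟩ : Fin k) then (1:ℝ) else 0)
        = Ns k ℓ (fun i : Fin (ℓ+1) => X i.val ω) := by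
      rw [Ns]
      apply Finset.sum_congr rfl
      intro i hi
      have hi' : i ≤ ℓ := (Finset.mem_Icc.1 hi).2
      have hr : restr (fun j : Fin (ℓ+1) => X j.val ω) i = X i ω := by
        unfold restr
        simp [min_eq_left hi']
      rw [hr, fk]
      apply if_congr _ rfl rfl
      constructor
      · intro h; rw [h]
      · intro h; exact Fin.ext (by simpa using h)
    rw [hsum]
    have hb : ((k:ℝ) * ∑ i ∈ range k, (1:ℝ)/(i+1))⁻¹ = bk k := rfl
    rw [hb]
  rw [hev, partition μ X hmeas ℓ Q]
  rw [ENNReal.toReal_sum (fun s _ => measure_ne_top μ _)]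
  have hval : ∀ s : Fin (ℓ+1) → Fin k,
      (μ {ω | ∀ i : Fin (ℓ+1), X i.val ω = s i}).toReal = wgt k ℓ s := by
    intro s
    rw [tupleCyl_eq X ℓ s, cylVal μ X hk hmeas hstart hm ℓ (restr s)]
    rfl
  rw [Finset.sum_congr rfl (fun s _ => hval s)]
  exact core hk hε hε1 ℓ
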